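/- Let U be a measurable space, D a probability distribution on U, g : U → {±1} a measurable function, N a positive integer, and p : (U × {±1})^N → [0,1] a measurable function (representing the acceptance probability of a tester given N labeled samples). Suppose that E_{x₁,…,x_N iid ∼ D}[p((x₁,g(x₁)), …, (x_N,g(x_N)))] ≥ 1 − δ₂. Let S = (z₁, …, z_M) consist of M i.i.d. draws from D. Then for every Δ ∈ (0,1), with probability at least 1 − Δ over the choice of S, the quantity E_{i₁,…,i_N iid uniform on {1,…,M}}[p((z_{i₁}, g(z_{i₁})), …, (z_{i_N}, g(z_{i_N})))] is at least 1 − δ₂ − N²/M − N/√(Δ·M). -/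

import Mathlib

open MeasureTheory

open scoped Classical
set_option maxHeartbeats 2000000

lemma tfl_indep_master {U : Type*} [MeasurableSpace U] (D : Measure U) [IsProbabilityMeasure D]
    {α β : Type*} [Fintype α] [Fintype β] {M : ℕ}
    (ι : α ⊕ β → Fin M) (hι : Function.Injective ι)
    (F : (α → U) → ℝ) (G : (β → U) → ℝ) :
    ∫ z : Fin M → U, F (fun a => z (ι (.inl a))) * G (fun b => z (ι (.inr b)))
        ∂(Measure.pi fun _ => D)
      = (∫ x, F x ∂(Measure.pi fun _ : α => D)) * ∫ y, G y ∂(Measure.pi fun _ : β => D) := by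
  classical
  set e : (α ⊕ β) ⊕ ↥(Set.range ι)ᶜ ≃ Fin M :=
    (Equiv.sumCongr (Equiv.ofInjective ι hι) (Equiv.refl _)).trans (Equiv.Set.sumCompl _) with he
  have heapp : ∀ s, e (Sum.inl s) = ι s := by
    intro s; simp [he]
  let T : (Fin M → U) ≃ᵐ (((α ⊕ β) → U) × (↥(Set.range ι)ᶜ → U)) :=
    ((MeasurableEquiv.piCongrLeft (fun _ : Fin M => U) e).symm).trans
      (MeasurableEquiv.sumPiEquivProdPi (fun _ => U))
  have hT : MeasurePreserving T (Measure.pi fun _ : Fin M => D)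
      ((Measure.pi fun _ : α ⊕ β => D).prod (Measure.pi fun _ : ↥(Set.range ι)ᶜ => D)) :=
    (measurePreserving_sumPiEquivProdPi (fun _ => D)).comp
      ((measurePreserving_piCongrLeft (fun _ => D) e).symm _)
  have hTfst : ∀ z s, (T z).1 s = z (ι s) := by
    intro z s
    show ((MeasurableEquiv.piCongrLeft (fun _ : Fin M => U) e).symm z) (Sum.inl s) = z (ι s)
    simp [MeasurableEquiv.piCongrLeft, Equiv.piCongrLeft_symm_apply, heapp]
  have step1 : ∫ z : Fin M → U, F (fun a => z (ι (.inl a))) * G (fun b => z (ι (.inr b)))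
        ∂(Measure.pi fun _ => D)
      = ∫ w, F (fun a => w (Sum.inl a)) * G (fun b => w (Sum.inr b))
          ∂(Measure.pi fun _ : α ⊕ β => D) := by
    have := hT.integral_comp' (f := T)
      (g := fun x : ((α ⊕ β) → U) × (↥(Set.range ι)ᶜ → U) =>
        F (fun a => x.1 (Sum.inl a)) * G (fun b => x.1 (Sum.inr b)))
    rw [show (fun z : Fin M → U => F (fun a => z (ι (.inl a))) * G (fun b => z (ι (.inr b))))
        = fun z => F (fun a => (T z).1 (Sum.inl a)) * G (fun b => (T z).1 (Sum.inr b)) by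
      funext z; simp [hTfst]] at *
    rw [this]
    rw [show (fun x : ((α ⊕ β) → U) × (↥(Set.range ι)ᶜ → U) =>
        F (fun a => x.1 (Sum.inl a)) * G (fun b => x.1 (Sum.inr b)))
      = fun x => (fun w => F (fun a => w (Sum.inl a)) * G (fun b => w (Sum.inr b))) x.1
          * (fun _ : ↥(Set.range ι)ᶜ → U => (1:ℝ)) x.2 by funext x; simp]
    rw [integral_prod_mul (f := fun w : (α ⊕ β) → U =>
      F (fun a => w (Sum.inl a)) * G (fun b => w (Sum.inr b)))
      (g := fun _ : ↥(Set.range ι)ᶜ → U => (1:ℝ))]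
    simp
  rw [step1]
  have h2 : MeasurePreserving (MeasurableEquiv.sumPiEquivProdPi (fun _ : α ⊕ β => U))
      (Measure.pi fun _ : α ⊕ β => D)
      ((Measure.pi fun _ : α => D).prod (Measure.pi fun _ : β => D)) :=
    measurePreserving_sumPiEquivProdPi (fun _ => D)
  rw [show (fun w : (α ⊕ β) → U => F (fun a => w (Sum.inl a)) * G (fun b => w (Sum.inr b)))
      = fun w => (fun x : (α → U) × (β → U) => F x.1 * G x.2)
          ((MeasurableEquiv.sumPiEquivProdPi (fun _ : α ⊕ β => U)) w) by
    funext w; rfl]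
  rw [h2.integral_comp' (g := fun x : (α → U) × (β → U) => F x.1 * G x.2)]
  exact integral_prod_mul (f := F) (g := G)


lemma tfl_single {U : Type*} [MeasurableSpace U] (D : Measure U) [IsProbabilityMeasure D]
    {α : Type*} [Fintype α] {M : ℕ} (ι₀ : α → Fin M) (hι₀ : Function.Injective ι₀)
    (F : (α → U) → ℝ) :
    ∫ z : Fin M → U, F (fun a => z (ι₀ a)) ∂(Measure.pi fun _ => D)
      = ∫ x, F x ∂(Measure.pi fun _ : α => D) := by
  have hinj : Function.Injective (Sum.elim ι₀ (fun x : Empty => x.elim) : α ⊕ Empty → Fin M) := by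
    intro x y hxy
    cases x with
    | inl a => cases y with
      | inl b => simp only [Sum.elim_inl] at hxy; exact congrArg Sum.inl (hι₀ hxy)
      | inr b => exact b.elim
    | inr a => exact a.elim
  have h := tfl_indep_master D _ hinj F (fun _ : Empty → U => (1 : ℝ))
  simpa using h

lemma tfl_indep {U : Type*} [MeasurableSpace U] (D : Measure U) [IsProbabilityMeasure D]
    {N M : ℕ} (i i' : Fin N → Fin M) (hdisj : Disjoint (Set.range i) (Set.range i'))
    (P Q : (Fin N → U) → ℝ) :
    ∫ z : Fin M → U, P (fun j => z (i j)) * Q (fun j => z (i' j)) ∂(Measure.pi fun _ => D)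
      = (∫ z : Fin M → U, P (fun j => z (i j)) ∂(Measure.pi fun _ => D))
        * ∫ z : Fin M → U, Q (fun j => z (i' j)) ∂(Measure.pi fun _ => D) := by
  let F : (↥(Set.range i) → U) → ℝ := fun w => P (fun j => w ⟨i j, Set.mem_range_self j⟩)
  let G : (↥(Set.range i') → U) → ℝ := fun w => Q (fun j => w ⟨i' j, Set.mem_range_self j⟩)
  let ι : ↥(Set.range i) ⊕ ↥(Set.range i') → Fin M := Sum.elim Subtype.val Subtype.val
  have hι : Function.Injective ι := by
    intro x y hxy
    cases x with
    | inl a => cases y with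
      | inl b =>
        simp only [ι, Sum.elim_inl] at hxy
        exact congrArg Sum.inl (Subtype.ext hxy)
      | inr b =>
        simp only [ι, Sum.elim_inl, Sum.elim_inr] at hxy
        exact absurd (hxy ▸ b.2) (Set.disjoint_left.mp hdisj a.2)
    | inr a => cases y with
      | inl b =>
        simp only [ι, Sum.elim_inl, Sum.elim_inr] at hxy
        exact absurd (hxy ▸ a.2) (Set.disjoint_left.mp hdisj b.2)
      | inr b =>
        simp only [ι, Sum.elim_inr] at hxy
        exact congrArg Sum.inr (Subtype.ext hxy)
  have hmain := tfl_indep_master D ι hι F G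
  have h1 := tfl_single D (Subtype.val : ↥(Set.range i) → Fin M) Subtype.val_injective F
  have h2 := tfl_single D (Subtype.val : ↥(Set.range i') → Fin M) Subtype.val_injective G
  calc ∫ z : Fin M → U, P (fun j => z (i j)) * Q (fun j => z (i' j)) ∂(Measure.pi fun _ => D)
      = ∫ z : Fin M → U, F (fun a => z (ι (.inl a))) * G (fun b => z (ι (.inr b)))
          ∂(Measure.pi fun _ => D) := rfl
    _ = (∫ x, F x ∂(Measure.pi fun _ : ↥(Set.range i) => D))
        * ∫ y, G y ∂(Measure.pi fun _ : ↥(Set.range i') => D) := hmain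
    _ = (∫ z : Fin M → U, P (fun j => z (i j)) ∂(Measure.pi fun _ => D))
        * ∫ z : Fin M → U, Q (fun j => z (i' j)) ∂(Measure.pi fun _ => D) := by
        rw [← h1, ← h2]


lemma tfl_card_ne {N : ℕ} (j' : Fin N) : Fintype.card {k : Fin N // k ≠ j'} = N - 1 := by
  rw [Fintype.card_subtype_compl (p := fun k => k = j'), Fintype.card_subtype_eq, Fintype.card_fin]

lemma tfl_count_aux {N M : ℕ} (j j' : Fin N) (hjj : j ≠ j') :
    ((Finset.univ : Finset (Fin N → Fin M)).filter fun i => i j = i j').card ≤ M ^ (N - 1) := by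
  have h : ((Finset.univ : Finset (Fin N → Fin M)).filter fun i => i j = i j').card
      ≤ (Finset.univ : Finset ({k : Fin N // k ≠ j'} → Fin M)).card := by
    apply Finset.card_le_card_of_injOn (fun i => fun k => i k.val) (fun _ _ => Finset.mem_univ _)
    intro a ha b hb hab
    simp only [Finset.mem_coe, Finset.mem_filter] at ha hb
    funext k
    by_cases hk : k = j'
    · subst hk
      rw [← ha.2, ← hb.2]
      exact congrFun hab ⟨j, hjj⟩
    · exact congrFun hab ⟨k, hk⟩
  have h2 : (Finset.univ : Finset ({k : Fin N // k ≠ j'} → Fin M)).card = M ^ (N - 1) := by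
    rw [Finset.card_univ, Fintype.card_fun, tfl_card_ne, Fintype.card_fin]
  exact h2 ▸ h

lemma tfl_count_aux2 {N M : ℕ} (j j' : Fin N) :
    ((Finset.univ : Finset ((Fin N → Fin M) × (Fin N → Fin M))).filter
        fun q => q.1 j = q.2 j').card ≤ M ^ N * M ^ (N - 1) := by
  have h : ((Finset.univ : Finset ((Fin N → Fin M) × (Fin N → Fin M))).filter
        fun q => q.1 j = q.2 j').card
      ≤ (Finset.univ : Finset ((Fin N → Fin M) × ({k : Fin N // k ≠ j'} → Fin M))).card := by
    apply Finset.card_le_card_of_injOn (fun q => (q.1, fun k => q.2 k.val))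
      (fun _ _ => Finset.mem_univ _)
    intro a ha b hb hab
    simp only [Finset.mem_coe, Finset.mem_filter] at ha hb
    simp only [Prod.mk.injEq] at hab
    obtain ⟨h1, h2⟩ := hab
    refine Prod.ext h1 ?_
    funext k
    by_cases hk : k = j'
    · subst hk
      rw [← ha.2, ← hb.2, h1]
    · exact congrFun h2 ⟨k, hk⟩
  have h2 : (Finset.univ : Finset ((Fin N → Fin M) × ({k : Fin N // k ≠ j'} → Fin M))).card
      = M ^ N * M ^ (N - 1) := by
    rw [Finset.card_univ, Fintype.card_prod, Fintype.card_fun, Fintype.card_fun,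
      tfl_card_ne, Fintype.card_fin, Fintype.card_fin]
  exact h2 ▸ h

lemma tfl_noninj_card {N M : ℕ} :
    ((Finset.univ : Finset (Fin N → Fin M)).filter fun i => ¬ Function.Injective i).card
      ≤ N ^ 2 * M ^ (N - 1) := by
  set Pr := (Finset.univ : Finset (Fin N × Fin N)).filter fun jj => jj.1 ≠ jj.2 with hPr
  have hsub : (Finset.univ : Finset (Fin N → Fin M)).filter (fun i => ¬ Function.Injective i)
      ⊆ Pr.biUnion fun jj => Finset.univ.filter fun i => i jj.1 = i jj.2 := by
    intro i hi
    simp only [Finset.mem_filter, Finset.mem_univ, true_and] at hi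
    obtain ⟨a, b, hab, hne⟩ := Function.not_injective_iff.mp hi
    refine Finset.mem_biUnion.mpr ⟨(a, b), ?_, ?_⟩
    · simp [hPr, hne]
    · simp only [Finset.mem_filter, Finset.mem_univ, true_and]
      exact hab
  have hPrcard : Pr.card ≤ N ^ 2 := by
    have := Finset.card_filter_le (Finset.univ : Finset (Fin N × Fin N)) fun jj => jj.1 ≠ jj.2
    rwa [Finset.card_univ, Fintype.card_prod, Fintype.card_fin, ← sq] at this
  have s1 := Finset.card_le_card hsub
  have s2 : (Pr.biUnion fun jj => Finset.univ.filter fun i : Fin N → Fin M => i jj.1 = i jj.2).card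
      ≤ ∑ jj ∈ Pr, ((Finset.univ : Finset (Fin N → Fin M)).filter
          fun i => i jj.1 = i jj.2).card := Finset.card_biUnion_le
  have s3 : ∑ jj ∈ Pr, ((Finset.univ : Finset (Fin N → Fin M)).filter
          fun i => i jj.1 = i jj.2).card ≤ ∑ jj ∈ Pr, M ^ (N - 1) := by
    apply Finset.sum_le_sum
    intro jj hjj
    exact tfl_count_aux jj.1 jj.2 (by simpa [hPr] using hjj)
  have s4 : ∑ jj ∈ Pr, M ^ (N - 1) = Pr.card * M ^ (N - 1) := by
    rw [Finset.sum_const, smul_eq_mul]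
  exact le_trans (le_trans (le_trans s1 s2) (le_trans s3 (le_of_eq s4)))
    (Nat.mul_le_mul_right _ hPrcard)

lemma tfl_overlap_card {N M : ℕ} :
    ((Finset.univ : Finset ((Fin N → Fin M) × (Fin N → Fin M))).filter
        fun q => ¬ Disjoint (Set.range q.1) (Set.range q.2)).card
      ≤ N ^ 2 * (M ^ N * M ^ (N - 1)) := by
  have hsub : (Finset.univ : Finset ((Fin N → Fin M) × (Fin N → Fin M))).filter
        (fun q => ¬ Disjoint (Set.range q.1) (Set.range q.2))
      ⊆ (Finset.univ : Finset (Fin N × Fin N)).biUnion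
          fun jj => Finset.univ.filter fun q => q.1 jj.1 = q.2 jj.2 := by
    intro q hq
    simp only [Finset.mem_filter, Finset.mem_univ, true_and] at hq
    obtain ⟨x, hx1, hx2⟩ := Set.not_disjoint_iff.mp hq
    obtain ⟨j, hj⟩ := hx1
    obtain ⟨j', hj'⟩ := hx2
    refine Finset.mem_biUnion.mpr ⟨(j, j'), Finset.mem_univ _, ?_⟩
    simp only [Finset.mem_filter, Finset.mem_univ, true_and]
    rw [hj, hj']
  have s1 := Finset.card_le_card hsub
  have s2 : ((Finset.univ : Finset (Fin N × Fin N)).biUnion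
        (fun jj => Finset.univ.filter
          fun q : (Fin N → Fin M) × (Fin N → Fin M) => q.1 jj.1 = q.2 jj.2)).card
      ≤ ∑ jj ∈ (Finset.univ : Finset (Fin N × Fin N)),
          ((Finset.univ : Finset ((Fin N → Fin M) × (Fin N → Fin M))).filter
            fun q => q.1 jj.1 = q.2 jj.2).card := Finset.card_biUnion_le
  have s3 : ∑ jj ∈ (Finset.univ : Finset (Fin N × Fin N)),
          ((Finset.univ : Finset ((Fin N → Fin M) × (Fin N → Fin M))).filter
            fun q => q.1 jj.1 = q.2 jj.2).card
      ≤ ∑ _jj ∈ (Finset.univ : Finset (Fin N × Fin N)), M ^ N * M ^ (N - 1) :=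
    Finset.sum_le_sum fun jj _ => tfl_count_aux2 jj.1 jj.2
  have s4 : ∑ _jj ∈ (Finset.univ : Finset (Fin N × Fin N)), M ^ N * M ^ (N - 1)
      = N ^ 2 * (M ^ N * M ^ (N - 1)) := by
    rw [Finset.sum_const, smul_eq_mul, Finset.card_univ, Fintype.card_prod, Fintype.card_fin, sq]
  exact le_trans (le_trans s1 s2) (le_trans s3 (le_of_eq s4))


/-- **Tester fooling lemma.** Let `U` be a measurable space, `D` a probability distribution on
`U`, `g : U → {±1}` measurable (labels encoded by `Bool`), `N` a positive integer, and
`p : (U × {±1})^N → [0,1]` a measurable function giving the acceptance probability of a tester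
on each tuple of `N` labeled samples. Suppose the tester accepts `N` i.i.d. `g`-labeled samples
from `D` with probability at least `1 − δ₂`. Let `S = (z₁, …, z_M)` be `M` i.i.d. draws from
`D`. Then for every `Δ ∈ (0,1)`, with probability at least `1 − Δ` over `S`, the acceptance
probability of the tester on `N` samples drawn i.i.d. uniformly from `S` (labeled by `g`) is at
least `1 − δ₂ − N²/M − N/√(Δ·M)`. -/
theorem tester_fooling_lemma
    (U : Type*) [MeasurableSpace U] (D : Measure U) (hD : IsProbabilityMeasure D)
    (g : U → Bool) (hg : Measurable g)
    (N M : ℕ) (hN : 0 < N) (hM : 0 < M)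
    (p : (Fin N → U × Bool) → ℝ) (hp : Measurable p)
    (hp01 : ∀ s, p s ∈ Set.Icc (0 : ℝ) 1)
    (δ₂ : ℝ)
    (hacc : 1 - δ₂ ≤ ∫ xs, p (fun j => (xs j, g (xs j))) ∂(Measure.pi fun _ : Fin N => D))
    (Δ : ℝ) (hΔ : Δ ∈ Set.Ioo (0 : ℝ) 1) :
    1 - Δ ≤ ((Measure.pi fun _ : Fin M => D)
        {z : Fin M → U |
          1 - δ₂ - (N : ℝ) ^ 2 / M - N / Real.sqrt (Δ * M) ≤
            (1 / (M : ℝ) ^ N) *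
              ∑ i : Fin N → Fin M, p (fun j => (z (i j), g (z (i j))))}).toReal := by
  haveI := hD
  set μM : Measure (Fin M → U) := Measure.pi fun _ : Fin M => D with hμM
  haveI : IsProbabilityMeasure μM := by rw [hμM]; infer_instance
  have hMR : (0:ℝ) < M := Nat.cast_pos.mpr hM
  have hNR : (0:ℝ) < N := Nat.cast_pos.mpr hN
  have hMN : (0:ℝ) < (M:ℝ)^N := pow_pos hMR N
  have hpow : (M:ℝ)^(N-1) * M = (M:ℝ)^N := by
    rw [← pow_succ, Nat.sub_add_cancel hN]
  -- the labeled-sample functional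
  set P : (Fin N → U) → ℝ := fun xs => p (fun j => (xs j, g (xs j))) with hPdef
  have hPmeas : Measurable P := hp.comp (measurable_pi_lambda _ fun j =>
    (measurable_pi_apply j).prodMk (hg.comp (measurable_pi_apply j)))
  have hP01 : ∀ xs, P xs ∈ Set.Icc (0:ℝ) 1 := fun xs => hp01 _
  set A : ℝ := ∫ xs, P xs ∂(Measure.pi fun _ : Fin N => D) with hAdef
  have hAacc : 1 - δ₂ ≤ A := hacc
  have hPint : Integrable P (Measure.pi fun _ : Fin N => D) :=
    memLp_one_iff_integrable.mp
      (memLp_of_bounded (Filter.Eventually.of_forall hP01) hPmeas.aestronglyMeasurable 1)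
  have hA1 : A ≤ 1 := by
    have := integral_mono hPint (integrable_const (1:ℝ)) (fun xs => (hP01 xs).2)
    simpa [hAdef] using this
  have hA0 : 0 ≤ A := integral_nonneg fun xs => (hP01 xs).1
  -- per-tuple functions
  set q : (Fin N → Fin M) → (Fin M → U) → ℝ := fun i z => P (fun j => z (i j)) with hqdef
  have hqmeas : ∀ i, Measurable (q i) := fun i =>
    hPmeas.comp (measurable_pi_lambda _ fun j => measurable_pi_apply _)
  have hq01 : ∀ i z, q i z ∈ Set.Icc (0:ℝ) 1 := fun i z => hP01 _
  have hqint : ∀ i, Integrable (q i) μM := fun i =>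
    memLp_one_iff_integrable.mp
      (memLp_of_bounded (Filter.Eventually.of_forall (hq01 i)) (hqmeas i).aestronglyMeasurable 1)
  have hq2int : ∀ i i', Integrable (fun z => q i z * q i' z) μM := by
    intro i i'
    refine memLp_one_iff_integrable.mp (memLp_of_bounded (a := 0) (b := 1)
      (Filter.Eventually.of_forall fun z => ?_)
      ((hqmeas i).mul (hqmeas i')).aestronglyMeasurable 1)
    constructor
    · exact mul_nonneg (hq01 i z).1 (hq01 i' z).1
    · exact mul_le_one₀ (hq01 i z).2 (hq01 i' z).1 (hq01 i' z).2
  have hEq0 : ∀ i, 0 ≤ ∫ z, q i z ∂μM := fun i => integral_nonneg fun z => (hq01 i z).1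
  have hEq1 : ∀ i, ∫ z, q i z ∂μM ≤ 1 := by
    intro i
    have := integral_mono (hqint i) (integrable_const (1:ℝ)) (fun z => (hq01 i z).2)
    simpa using this
  have hEq_inj : ∀ i : Fin N → Fin M, Function.Injective i → ∫ z, q i z ∂μM = A :=
    fun i hi => tfl_single D i hi P
  -- the empirical average
  set f : (Fin M → U) → ℝ := fun z => (1 / (M : ℝ) ^ N) *
      ∑ i : Fin N → Fin M, p (fun j => (z (i j), g (z (i j)))) with hfdef
  have hfq : f = fun z => (1 / (M:ℝ)^N) * ∑ i : Fin N → Fin M, q i z := rfl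
  have hfmeas : Measurable f := by
    rw [hfq]
    exact measurable_const.mul (Finset.measurable_sum _ fun i _ => hqmeas i)
  have hf01 : ∀ z, f z ∈ Set.Icc (0:ℝ) 1 := by
    intro z
    rw [hfq]
    constructor
    · exact mul_nonneg (by positivity) (Finset.sum_nonneg fun i _ => (hq01 i z).1)
    · have hsum : ∑ i : Fin N → Fin M, q i z ≤ (M:ℝ)^N := by
        have h1 : ∑ i : Fin N → Fin M, q i z ≤ ∑ _i : Fin N → Fin M, (1:ℝ) :=
          Finset.sum_le_sum fun i _ => (hq01 i z).2
        have h2 : ∑ _i : Fin N → Fin M, (1:ℝ) = (M:ℝ)^N := by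
          rw [Finset.sum_const, Finset.card_univ, Fintype.card_fun, Fintype.card_fin,
            Fintype.card_fin, nsmul_eq_mul, mul_one, Nat.cast_pow]
        linarith
      calc (1 / (M:ℝ)^N) * ∑ i : Fin N → Fin M, q i z ≤ (1 / (M:ℝ)^N) * (M:ℝ)^N :=
            mul_le_mul_of_nonneg_left hsum (by positivity)
        _ = 1 := one_div_mul_cancel hMN.ne'
  have hfmem : MemLp f 2 μM :=
    memLp_of_bounded (Filter.Eventually.of_forall hf01) hfmeas.aestronglyMeasurable 2
  -- expectation of f
  have hEf : ∫ z, f z ∂μM = (1/(M:ℝ)^N) * ∑ i : Fin N → Fin M, ∫ z, q i z ∂μM := by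
    rw [hfq]
    rw [integral_const_mul]
    rw [integral_finset_sum _ fun i _ => hqint i]
  have hEflb : 1 - δ₂ - (N:ℝ)^2 / M ≤ ∫ z, f z ∂μM := by
    set I := (Finset.univ : Finset (Fin N → Fin M)).filter (fun i => Function.Injective i)
      with hI
    set J := (Finset.univ : Finset (Fin N → Fin M)).filter (fun i => ¬ Function.Injective i)
      with hJ
    have hsplit : ∑ i : Fin N → Fin M, ∫ z, q i z ∂μM
        = (∑ i ∈ I, ∫ z, q i z ∂μM) + ∑ i ∈ J, ∫ z, q i z ∂μM :=
      (Finset.sum_filter_add_sum_filter_not _ _ _).symm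
    have hIsum : ∑ i ∈ I, ∫ z, q i z ∂μM = I.card * A := by
      rw [Finset.sum_congr rfl fun i hi => hEq_inj i (Finset.mem_filter.mp hi).2,
        Finset.sum_const, nsmul_eq_mul]
    have hJsum : 0 ≤ ∑ i ∈ J, ∫ z, q i z ∂μM := Finset.sum_nonneg fun i _ => hEq0 i
    have hcardsplit : (I.card : ℝ) + J.card = (M:ℝ)^N := by
      have := Finset.card_filter_add_card_filter_not
        (s := (Finset.univ : Finset (Fin N → Fin M))) (p := fun i => Function.Injective i)
      have h2 : I.card + J.card = M ^ N := by
        rw [hI, hJ]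
        rw [this, Finset.card_univ, Fintype.card_fun, Fintype.card_fin, Fintype.card_fin]
      exact_mod_cast congrArg (Nat.cast : ℕ → ℝ) h2
    have hJcard : (J.card : ℝ) ≤ (N:ℝ)^2 * (M:ℝ)^(N-1) := by
      have := tfl_noninj_card (N := N) (M := M)
      calc (J.card : ℝ) ≤ ((N ^ 2 * M ^ (N-1) : ℕ) : ℝ) := Nat.cast_le.mpr this
        _ = (N:ℝ)^2 * (M:ℝ)^(N-1) := by push_cast; ring
    have hJfrac : (J.card : ℝ) / (M:ℝ)^N ≤ (N:ℝ)^2 / M := by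
      rw [div_le_div_iff₀ hMN hMR]
      calc (J.card : ℝ) * M ≤ ((N:ℝ)^2 * (M:ℝ)^(N-1)) * M :=
            mul_le_mul_of_nonneg_right hJcard hMR.le
        _ = (N:ℝ)^2 * ((M:ℝ)^(N-1) * M) := by ring
        _ = (N:ℝ)^2 * (M:ℝ)^N := by rw [hpow]
    have hstep : (1/(M:ℝ)^N) * (I.card * A) ≤ ∫ z, f z ∂μM := by
      rw [hEf, hsplit, hIsum]
      have : (0:ℝ) ≤ 1/(M:ℝ)^N := by positivity
      nlinarith [hJsum]
    have hIA : A - (N:ℝ)^2/M ≤ (1/(M:ℝ)^N) * (I.card * A) := by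
      have hIcard : (I.card : ℝ) = (M:ℝ)^N - J.card := by linarith
      rw [hIcard]
      have hJ0 : (0:ℝ) ≤ J.card := Nat.cast_nonneg _
      have expand : (1/(M:ℝ)^N) * (((M:ℝ)^N - J.card) * A)
          = A - ((J.card : ℝ)/(M:ℝ)^N) * A := by
        field_simp
      rw [expand]
      have h1 : ((J.card : ℝ)/(M:ℝ)^N) * A ≤ (J.card : ℝ)/(M:ℝ)^N := by
        nlinarith [div_nonneg hJ0 hMN.le]
      nlinarith
    linarith
  -- variance of f
  have hvar : ProbabilityTheory.variance f μM ≤ (N:ℝ)^2 / M := by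
    have hfsq : (fun z => f z ^ 2) = fun z => (1/(M:ℝ)^N)^2 *
        ∑ i : Fin N → Fin M, ∑ i' : Fin N → Fin M, q i z * q i' z := by
      funext z
      rw [hfq]
      rw [mul_pow, pow_two (∑ i : Fin N → Fin M, q i z), Finset.sum_mul_sum]
    have hstep : ∫ z, (∑ i : Fin N → Fin M, ∑ i' : Fin N → Fin M, q i z * q i' z) ∂μM
        = ∑ i : Fin N → Fin M, ∑ i' : Fin N → Fin M, ∫ z, q i z * q i' z ∂μM := by
      rw [integral_finset_sum _ fun i _ => integrable_finset_sum _ fun i' _ => hq2int i i']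
      exact Finset.sum_congr rfl fun i _ => integral_finset_sum _ fun i' _ => hq2int i i'
    have hEf2 : ∫ z, f z ^ 2 ∂μM = (1/(M:ℝ)^N)^2 *
        ∑ i : Fin N → Fin M, ∑ i' : Fin N → Fin M, ∫ z, q i z * q i' z ∂μM := by
      rw [hfsq, integral_const_mul, hstep]
    have hEfsq : (∫ z, f z ∂μM)^2 = (1/(M:ℝ)^N)^2 *
        ∑ i : Fin N → Fin M, ∑ i' : Fin N → Fin M,
          (∫ z, q i z ∂μM) * ∫ z, q i' z ∂μM := by
      rw [hEf, mul_pow, pow_two (∑ i : Fin N → Fin M, ∫ z, q i z ∂μM), Finset.sum_mul_sum]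
    have hvardef : ProbabilityTheory.variance f μM = (1/(M:ℝ)^N)^2 *
        ∑ i : Fin N → Fin M, ∑ i' : Fin N → Fin M,
          ((∫ z, q i z * q i' z ∂μM) - (∫ z, q i z ∂μM) * ∫ z, q i' z ∂μM) := by
      rw [ProbabilityTheory.variance_eq_sub hfmem]
      simp only [Pi.pow_apply]
      rw [hEf2, hEfsq, ← mul_sub]
      congr 1
      rw [← Finset.sum_sub_distrib]
      exact Finset.sum_congr rfl fun i _ => (Finset.sum_sub_distrib _ _).symm
    have hterm : ∀ i i' : Fin N → Fin M,
        (∫ z, q i z * q i' z ∂μM) - (∫ z, q i z ∂μM) * ∫ z, q i' z ∂μM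
          ≤ if Disjoint (Set.range i) (Set.range i') then (0:ℝ) else 1 := by
      intro i i'
      by_cases hd : Disjoint (Set.range i) (Set.range i')
      · rw [if_pos hd]
        simp only [hqdef]
        rw [tfl_indep D i i' hd P P, sub_self]
      · rw [if_neg hd]
        have h2 : ∫ z, q i z * q i' z ∂μM ≤ 1 := by
          have := integral_mono (hq2int i i') (integrable_const (1:ℝ))
            (fun z => mul_le_one₀ (hq01 i z).2 (hq01 i' z).1 (hq01 i' z).2)
          simpa using this
        nlinarith [hEq0 i, hEq0 i']
    have hsumbound : ∑ i : Fin N → Fin M, ∑ i' : Fin N → Fin M,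
        ((∫ z, q i z * q i' z ∂μM) - (∫ z, q i z ∂μM) * ∫ z, q i' z ∂μM)
        ≤ (N:ℝ)^2 * ((M:ℝ)^N * (M:ℝ)^(N-1)) := by
      have hb1 : ∑ i : Fin N → Fin M, ∑ i' : Fin N → Fin M,
          ((∫ z, q i z * q i' z ∂μM) - (∫ z, q i z ∂μM) * ∫ z, q i' z ∂μM)
          ≤ ∑ i : Fin N → Fin M, ∑ i' : Fin N → Fin M,
            (if Disjoint (Set.range i) (Set.range i') then (0:ℝ) else 1) :=
        Finset.sum_le_sum fun i _ => Finset.sum_le_sum fun i' _ => hterm i i'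
      have hb2 : ∑ i : Fin N → Fin M, ∑ i' : Fin N → Fin M,
          (if Disjoint (Set.range i) (Set.range i') then (0:ℝ) else 1)
          = (((Finset.univ : Finset ((Fin N → Fin M) × (Fin N → Fin M))).filter
              fun qq => ¬ Disjoint (Set.range qq.1) (Set.range qq.2)).card : ℝ) := by
        rw [← Finset.sum_product']
        rw [Finset.univ_product_univ]
        have hite : ∀ qq : (Fin N → Fin M) × (Fin N → Fin M),
            (if Disjoint (Set.range qq.1) (Set.range qq.2) then (0:ℝ) else 1)
            = if ¬ Disjoint (Set.range qq.1) (Set.range qq.2) then (1:ℝ) else 0 := by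
          intro qq
          by_cases h : Disjoint (Set.range qq.1) (Set.range qq.2) <;> simp [h]
        simp_rw [hite]
        rw [Finset.sum_boole]
      have hb3 : (((Finset.univ : Finset ((Fin N → Fin M) × (Fin N → Fin M))).filter
              fun qq => ¬ Disjoint (Set.range qq.1) (Set.range qq.2)).card : ℝ)
          ≤ (N:ℝ)^2 * ((M:ℝ)^N * (M:ℝ)^(N-1)) := by
        have := tfl_overlap_card (N := N) (M := M)
        calc _ ≤ ((N ^ 2 * (M ^ N * M ^ (N-1)) : ℕ) : ℝ) := Nat.cast_le.mpr this
          _ = (N:ℝ)^2 * ((M:ℝ)^N * (M:ℝ)^(N-1)) := by push_cast; ring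
      linarith
    have hM1 : (M:ℝ)^(N-1) = (M:ℝ)^N / M := by
      rw [eq_div_iff hMR.ne']
      exact hpow
    have harith : (1/(M:ℝ)^N)^2 * ((N:ℝ)^2 * ((M:ℝ)^N * (M:ℝ)^(N-1))) = (N:ℝ)^2 / M := by
      rw [hM1]
      field_simp
    rw [hvardef, ← harith]
    exact mul_le_mul_of_nonneg_left hsumbound (by positivity)
  -- Chebyshev
  have hΔM : (0:ℝ) < Δ * M := mul_pos hΔ.1 hMR
  have hsqrt : (0:ℝ) < Real.sqrt (Δ * M) := Real.sqrt_pos.mpr hΔM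
  set c0 : ℝ := (N:ℝ) / Real.sqrt (Δ * M) with hc0def
  have hc0 : 0 < c0 := div_pos hNR hsqrt
  have hcheb := ProbabilityTheory.meas_ge_le_variance_div_sq (μ := μM) hfmem hc0
  have hc0sq : c0^2 = (N:ℝ)^2 / (Δ * M) := by
    rw [hc0def, div_pow, Real.sq_sqrt hΔM.le]
  have hratio : ProbabilityTheory.variance f μM / c0^2 ≤ Δ := by
    rw [div_le_iff₀ (by positivity)]
    calc ProbabilityTheory.variance f μM ≤ (N:ℝ)^2 / M := hvar
      _ = Δ * c0^2 := by
          rw [hc0sq]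
          field_simp
          rw [div_self hΔ.1.ne']
  have hbadle : μM {z | c0 ≤ |f z - ∫ z, f z ∂μM|} ≤ ENNReal.ofReal Δ :=
    hcheb.trans (ENNReal.ofReal_le_ofReal hratio)
  -- conclusion
  have hbadm : MeasurableSet {z | c0 ≤ |f z - ∫ z, f z ∂μM|} :=
    measurableSet_le measurable_const (hfmeas.sub measurable_const).abs
  have hsub2 : {z | c0 ≤ |f z - ∫ z, f z ∂μM|}ᶜ ⊆
      {z : Fin M → U | 1 - δ₂ - (N : ℝ) ^ 2 / M - N / Real.sqrt (Δ * M) ≤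
        (1 / (M : ℝ) ^ N) * ∑ i : Fin N → Fin M, p (fun j => (z (i j), g (z (i j))))} := by
    intro z hz
    simp only [Set.mem_compl_iff, Set.mem_setOf_eq, not_le] at hz
    have h1 : (∫ z, f z ∂μM) - f z ≤ |f z - ∫ z, f z ∂μM| := by
      rw [abs_sub_comm]
      exact le_abs_self _
    show 1 - δ₂ - (N : ℝ) ^ 2 / M - N / Real.sqrt (Δ * M) ≤ f z
    have := hEflb
    rw [hc0def] at hz
    linarith
  have hmono := measure_mono (μ := μM) hsub2
  have hcompl : μM {z | c0 ≤ |f z - ∫ z, f z ∂μM|}ᶜ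
      = 1 - μM {z | c0 ≤ |f z - ∫ z, f z ∂μM|} := prob_compl_eq_one_sub hbadm
  have htone := ENNReal.toReal_mono (measure_ne_top μM _) hmono
  have h2 : (μM {z | c0 ≤ |f z - ∫ z, f z ∂μM|}ᶜ).toReal
      = 1 - (μM {z | c0 ≤ |f z - ∫ z, f z ∂μM|}).toReal := by
    rw [hcompl, ENNReal.toReal_sub_of_le prob_le_one ENNReal.one_ne_top, ENNReal.toReal_one]
  have h3 : (μM {z | c0 ≤ |f z - ∫ z, f z ∂μM|}).toReal ≤ Δ := by
    have := ENNReal.toReal_mono ENNReal.ofReal_ne_top hbadle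
    rwa [ENNReal.toReal_ofReal hΔ.1.le] at this
  linarith [htone, h2, h3]
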